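/- Let U be a 2-dimensional linear subspace of Minkowski space ℝ⁴ such that η(v,v) ≠ 0 for every nonzero v ∈ U (i.e., U contains no null vectors). Then η(v,v) > 0 for every nonzero v ∈ U, i.e., U is spacelike. -/

import Mathlib

/-- The Minkowski bilinear form on `ℝ⁴` with signature `(-,+,+,+)`. -/
def eta (v w : Fin 4 → ℝ) : ℝ :=
  -(v 0 * w 0) + v 1 * w 1 + v 2 * w 2 + v 3 * w 3

/-- A real quadratic with positive leading coefficient and negative constant
term has a root. -/
lemma quadratic_root (a b c : ℝ) (ha : 0 < a) (hc : c < 0) :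
    ∃ t : ℝ, a * t ^ 2 + 2 * b * t + c = 0 := by
  have hD : 0 ≤ b ^ 2 - a * c := by nlinarith [sq_nonneg b]
  have hs : Real.sqrt (b ^ 2 - a * c) * Real.sqrt (b ^ 2 - a * c) = b ^ 2 - a * c :=
    Real.mul_self_sqrt hD
  refine ⟨(-b + Real.sqrt (b ^ 2 - a * c)) / a, ?_⟩
  field_simp
  nlinarith [hs]

/-- a 2-dimensional subspace of Minkowski space containing no
null vectors is spacelike. -/
theorem stmt3 (U : Submodule ℝ (Fin 4 → ℝ)) (hdim : Module.finrank ℝ U = 2)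
    (hnonull : ∀ v ∈ U, v ≠ 0 → eta v v ≠ 0) :
    ∀ v ∈ U, v ≠ 0 → 0 < eta v v := by
  intro v hv hv0
  by_contra hcon
  push_neg at hcon
  have hneg : eta v v < 0 := lt_of_le_of_ne hcon (hnonull v hv hv0)
  have hv00 : v 0 ≠ 0 := by
    intro h0
    have : 0 ≤ eta v v := by
      simp only [eta, h0]
      nlinarith [sq_nonneg (v 1), sq_nonneg (v 2), sq_nonneg (v 3)]
    linarith
  -- find w ∈ U outside span {v}
  have hnle : ¬ (U ≤ Submodule.span ℝ {v}) := by
    intro hle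
    have h1 : Module.finrank ℝ (Submodule.span ℝ {v}) = 1 :=
      finrank_span_singleton hv0
    have h2 := Submodule.finrank_mono hle
    rw [hdim, h1] at h2
    omega
  obtain ⟨w, hwU, hwspan⟩ := SetLike.not_le_iff_exists.mp hnle
  clear hnle
  obtain ⟨w', hw'def⟩ : ∃ w', w' = w - (w 0 / v 0) • v := ⟨_, rfl⟩
  have hw'U : w' ∈ U := by rw [hw'def]; exact U.sub_mem hwU (U.smul_mem _ hv)
  have hw'0 : w' 0 = 0 := by
    rw [hw'def]
    simp only [Pi.sub_apply, Pi.smul_apply, smul_eq_mul]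
    field_simp
    ring
  have hw'ne : w' ≠ 0 := by
    intro h
    apply hwspan
    rw [Submodule.mem_span_singleton]
    refine ⟨w 0 / v 0, ?_⟩
    have h2 : w - (w 0 / v 0) • v = 0 := by rw [← hw'def, h]
    linear_combination (norm := abel) -h2
  have hw'pos : 0 < eta w' w' := by
    obtain ⟨i, hi⟩ := Function.ne_iff.mp hw'ne
    simp only [Pi.zero_apply] at hi
    fin_cases i
    · exact absurd hw'0 hi
    · simp only [eta, hw'0]
      nlinarith [mul_self_pos.mpr (show w' 1 ≠ 0 from hi),
        mul_self_nonneg (w' 2), mul_self_nonneg (w' 3)]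
    · simp only [eta, hw'0]
      nlinarith [mul_self_pos.mpr (show w' 2 ≠ 0 from hi),
        mul_self_nonneg (w' 1), mul_self_nonneg (w' 3)]
    · simp only [eta, hw'0]
      nlinarith [mul_self_pos.mpr (show w' 3 ≠ 0 from hi),
        mul_self_nonneg (w' 1), mul_self_nonneg (w' 2)]
  obtain ⟨t, ht⟩ := quadratic_root (eta w' w') (eta v w') (eta v v) hw'pos hneg
  have huU : v + t • w' ∈ U := U.add_mem hv (U.smul_mem _ hw'U)
  have hune : v + t • w' ≠ 0 := by
    intro h
    have hveq : ∀ i, v i = -(t * w' i) := by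
      intro i
      have := congrFun h i
      simp only [Pi.add_apply, Pi.smul_apply, smul_eq_mul, Pi.zero_apply] at this
      linarith
    have : eta v v = t ^ 2 * eta w' w' := by
      simp only [eta, hveq]
      ring
    nlinarith [sq_nonneg t]
  have hequ : eta (v + t • w') (v + t • w') =
      eta w' w' * t ^ 2 + 2 * eta v w' * t + eta v v := by
    simp only [eta, Pi.add_apply, Pi.smul_apply, smul_eq_mul]
    ring
  exact hnonull _ huU hune (by rw [hequ, ht])
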